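/- Let (Ω, 𝓐, μ) be a probability space and T : Ω → Ω an ergodic measure-preserving map. Let γ : Ω → (0, ∞) be measurable with log γ integrable and ∫ log γ dμ < 0, and let δ : Ω → [0, ∞) be measurable with log(max(δ, 1)) integrable. Then for μ-almost every ω ∈ Ω, the series Σ_{i=0}^∞ δ(T^i ω) · Π_{k=0}^{i−1} γ(T^k ω) converges (is finite), where the empty product for i = 0 equals 1. -/

import Mathlib

open MeasureTheory Filter Set ENNReal

section Maximal

variable {Ω : Type*} [MeasurableSpace Ω] {μ : Measure Ω} {T : Ω → Ω} {g : Ω → ℝ}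

/-- running max of Birkhoff sums `S_0, ..., S_N` (note `S_0 = 0`). -/
noncomputable def maxBS (T : Ω → Ω) (g : Ω → ℝ) : ℕ → Ω → ℝ
  | 0 => fun _ => 0
  | (N+1) => fun ω => max (maxBS T g N ω) (birkhoffSum T g (N+1) ω)

lemma maxBS_nonneg (N : ℕ) (ω : Ω) : 0 ≤ maxBS T g N ω := by
  induction N with
  | zero => simp [maxBS]
  | succ N ih => exact le_trans ih (le_max_left _ _)

lemma maxBS_mono (ω : Ω) : Monotone fun N => maxBS T g N ω := by
  apply monotone_nat_of_le_succ
  intro N; exact le_max_left _ _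

lemma birkhoffSum_le_maxBS {n N : ℕ} (h : n ≤ N) (ω : Ω) :
    birkhoffSum T g n ω ≤ maxBS T g N ω := by
  induction N with
  | zero => simp [Nat.le_zero.mp h, maxBS]
  | succ N ih =>
      rcases Nat.lt_or_ge n (N+1) with h'|h'
      · exact le_trans (ih (Nat.lt_succ_iff.mp h')) (le_max_left _ _)
      · have : n = N + 1 := le_antisymm h h'
        subst this; exact le_max_right _ _

lemma measurable_maxBS (hT : Measurable T) (hg : Measurable g) (N : ℕ) :
    Measurable (maxBS T g N) := by
  induction N with
  | zero => simpa [maxBS] using measurable_const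
  | succ N ih =>
      apply Measurable.max ih
      apply Finset.measurable_sum
      intro k _
      exact hg.comp (hT.iterate k)

lemma integrable_birkhoffSum (hT : MeasurePreserving T μ μ) (hg : Integrable g μ) (n : ℕ) :
    Integrable (birkhoffSum T g n) μ := by
  apply integrable_finset_sum
  intro k _
  exact ((hT.iterate k).integrable_comp hg.aestronglyMeasurable).mpr hg

lemma integrable_maxBS (hT : MeasurePreserving T μ μ) (hg : Integrable g μ) (N : ℕ) :
    Integrable (maxBS T g N) μ := by
  induction N with
  | zero => simpa [maxBS] using integrable_const (0:ℝ)
  | succ N ih => exact ih.sup (integrable_birkhoffSum hT hg (N+1))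

/-- key Garsia inequality -/
lemma maxBS_succ_le (N : ℕ) (ω : Ω) :
    maxBS T g (N+1) ω ≤ max 0 (g ω + maxBS T g N (T ω)) := by
  induction N with
  | zero =>
      simp only [maxBS, birkhoffSum_one]
      have : g ω ≤ g ω + 0 := by simp
      simpa [maxBS] using le_max_right 0 (g ω)
  | succ N ih =>
      simp only [maxBS] at ih ⊢
      apply max_le
      · apply max_le
        · exact le_trans (le_max_left _ _) (le_trans ih (by
            apply max_le_max le_rfl
            exact add_le_add le_rfl (le_max_left _ _)))
        · calc birkhoffSum T g (N+1) ω = g ω + birkhoffSum T g N (T ω) := birkhoffSum_succ' T g N ω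
            _ ≤ g ω + max (maxBS T g N (T ω)) (birkhoffSum T g (N+1) (T ω)) := by
                apply add_le_add le_rfl
                exact le_trans (birkhoffSum_le_maxBS le_rfl (T ω)) (le_max_left _ _)
            _ ≤ max 0 _ := le_max_right _ _
      · calc birkhoffSum T g (N+2) ω = g ω + birkhoffSum T g (N+1) (T ω) := birkhoffSum_succ' T g (N+1) ω
          _ ≤ g ω + max (maxBS T g N (T ω)) (birkhoffSum T g (N+1) (T ω)) := add_le_add le_rfl (le_max_right _ _)
          _ ≤ max 0 _ := le_max_right _ _

lemma maxBS_le {N : ℕ} {ω : Ω} {c : ℝ} (h0 : 0 ≤ c)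
    (h : ∀ n, n ≤ N → birkhoffSum T g n ω ≤ c) : maxBS T g N ω ≤ c := by
  induction N with
  | zero => simpa [maxBS] using h0
  | succ N ih =>
      exact max_le (ih fun n hn => h n (hn.trans (Nat.le_succ N))) (h (N+1) le_rfl)

theorem maximal_ergodic (hT : MeasurePreserving T μ μ) [IsProbabilityMeasure μ]
    (hgm : Measurable g) (hgi : Integrable g μ) :
    0 ≤ ∫ ω in {ω | ∃ n, 0 < birkhoffSum T g n ω}, g ω ∂μ := by
  have hTm : Measurable T := hT.measurable
  set E : ℕ → Set Ω := fun N => {ω | 0 < maxBS T g N ω} with hE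
  have hEm : ∀ N, MeasurableSet (E N) :=
    fun N => measurableSet_lt measurable_const (measurable_maxBS hTm hgm N)
  have hmono : Monotone E := fun a b hab ω h => lt_of_lt_of_le h (maxBS_mono ω hab)
  have hstep : ∀ N, 0 ≤ ∫ ω in E N, g ω ∂μ := by
    intro N
    cases N with
    | zero => simp [hE, maxBS]
    | succ N =>
      have hPm : Measurable (maxBS T g (N+1)) := measurable_maxBS hTm hgm (N+1)
      have hPi : Integrable (maxBS T g (N+1)) μ := integrable_maxBS hT hgi (N+1)
      have hPiT : Integrable (fun ω => maxBS T g (N+1) (T ω)) μ :=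
        (hT.integrable_comp hPi.aestronglyMeasurable).mpr hPi
      have hpt : ∀ ω ∈ E (N+1), maxBS T g (N+1) ω - maxBS T g (N+1) (T ω) ≤ g ω := by
        intro ω hω
        have h1 := maxBS_succ_le (T := T) (g := g) N ω
        have h2 : maxBS T g (N+1) ω ≤ g ω + maxBS T g (N+1) (T ω) := by
          have hpos : 0 < maxBS T g (N+1) ω := hω
          have : maxBS T g (N+1) ω ≤ g ω + maxBS T g N (T ω) := by
            rcases le_or_gt (g ω + maxBS T g N (T ω)) 0 with h'|h'
            · exfalso; have := h1.trans (max_le le_rfl h'); linarith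
            · simpa [max_eq_right h'.le] using h1
          exact this.trans (add_le_add le_rfl (maxBS_mono (T ω) (Nat.le_succ N)))
        linarith
      have hint : ∫ ω in E (N+1), (maxBS T g (N+1) ω - maxBS T g (N+1) (T ω)) ∂μ
          ≤ ∫ ω in E (N+1), g ω ∂μ :=
        setIntegral_mono_on (hPi.sub hPiT).integrableOn hgi.integrableOn (hEm _) hpt
      have heq1 : ∫ ω in E (N+1), maxBS T g (N+1) ω ∂μ = ∫ ω, maxBS T g (N+1) ω ∂μ := by
        rw [← integral_add_compl (hEm (N+1)) hPi]
        have : ∫ ω in (E (N+1))ᶜ, maxBS T g (N+1) ω ∂μ = 0 := by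
          apply setIntegral_eq_zero_of_forall_eq_zero
          intro ω hω
          have : ¬ 0 < maxBS T g (N+1) ω := hω
          exact le_antisymm (not_lt.mp this) (maxBS_nonneg _ _)
        rw [this, add_zero]
      have heq2 : ∫ ω, maxBS T g (N+1) (T ω) ∂μ = ∫ ω, maxBS T g (N+1) ω ∂μ := by
        conv_rhs => rw [← hT.map_eq]
        rw [integral_map hTm.aemeasurable]
        rw [hT.map_eq]; exact hPi.aestronglyMeasurable
      have hle2 : ∫ ω in E (N+1), maxBS T g (N+1) (T ω) ∂μ
          ≤ ∫ ω, maxBS T g (N+1) (T ω) ∂μ :=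
        setIntegral_le_integral hPiT (Filter.Eventually.of_forall fun ω => maxBS_nonneg _ _)
      have hsub : ∫ ω in E (N+1), (maxBS T g (N+1) ω - maxBS T g (N+1) (T ω)) ∂μ
          = ∫ ω in E (N+1), maxBS T g (N+1) ω ∂μ
            - ∫ ω in E (N+1), maxBS T g (N+1) (T ω) ∂μ :=
        integral_sub hPi.integrableOn hPiT.integrableOn
      have : (0:ℝ) ≤ ∫ ω in E (N+1), (maxBS T g (N+1) ω - maxBS T g (N+1) (T ω)) ∂μ := by
        rw [hsub, heq1]
        have := hle2.trans_eq heq2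
        linarith
      exact this.trans hint
  have hUnion : (⋃ N, E N) = {ω | ∃ n, 0 < birkhoffSum T g n ω} := by
    ext ω
    simp only [mem_iUnion, mem_setOf_eq]
    constructor
    · rintro ⟨N, hN⟩
      by_contra h
      push_neg at h
      exact absurd (maxBS_le le_rfl fun n _ => h n) (not_le.mpr hN)
    · rintro ⟨n, hn⟩
      exact ⟨n, lt_of_lt_of_le hn (birkhoffSum_le_maxBS le_rfl ω)⟩
  have := tendsto_setIntegral_of_monotone hEm hmono (hgi.integrableOn)
  rw [hUnion] at this
  exact ge_of_tendsto' this hstep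

theorem ae_birkhoffSum_bddAbove {T : Ω → Ω} (hT : Ergodic T μ) [IsProbabilityMeasure μ]
    {f : Ω → ℝ} (hfm : Measurable f) (hfi : Integrable f μ)
    (hneg : ∫ ω, f ω ∂μ < 0) :
    ∀ᵐ ω ∂μ, ∃ C : ℝ, ∀ n, birkhoffSum T f n ω ≤ C := by
  have hSm : ∀ n, Measurable (birkhoffSum T f n) := fun n =>
    Finset.measurable_sum _ fun k _ => hfm.comp (hT.measurable.iterate k)
  set s := {ω | ∃ C : ℕ, ∀ n, birkhoffSum T f n ω ≤ (C : ℝ)} with hs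
  have hsm : MeasurableSet s := by
    have : s = ⋃ C : ℕ, ⋂ n : ℕ, {ω | birkhoffSum T f n ω ≤ (C : ℝ)} := by
      ext ω; simp [hs]
    rw [this]
    exact MeasurableSet.iUnion fun C => MeasurableSet.iInter fun n =>
      measurableSet_le (hSm n) measurable_const
  have hinv : T ⁻¹' s = s := by
    ext ω
    simp only [mem_preimage, hs, mem_setOf_eq]
    constructor
    · rintro ⟨C, hC⟩
      obtain ⟨C', hC'⟩ := exists_nat_ge (max (f ω + C) 0)
      refine ⟨C', fun n => ?_⟩
      cases n with
      | zero => simpa [birkhoffSum_zero] using (le_max_right (f ω + C) 0).trans hC'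
      | succ n =>
          rw [birkhoffSum_succ']
          exact (add_le_add le_rfl (hC n)).trans ((le_max_left _ _).trans hC')
    · rintro ⟨C, hC⟩
      obtain ⟨C', hC'⟩ := exists_nat_ge (max (C - f ω) 0)
      refine ⟨C', fun n => ?_⟩
      have := hC (n+1)
      rw [birkhoffSum_succ'] at this
      have : birkhoffSum T f n (T ω) ≤ C - f ω := by linarith
      exact this.trans ((le_max_left _ _).trans hC')
  rcases hT.toPreErgodic.measure_self_or_compl_eq_zero hsm hinv with h0 | h1
  · exfalso
    set B := {ω | ∃ n, 0 < birkhoffSum T f n ω} with hB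
    have hBm : MeasurableSet B := by
      have : B = ⋃ n : ℕ, {ω | 0 < birkhoffSum T f n ω} := by ext ω; simp [hB]
      rw [this]
      exact MeasurableSet.iUnion fun n => measurableSet_lt measurable_const (hSm n)
    have hsub : Bᶜ ⊆ s := by
      intro ω hω
      simp only [hB, mem_compl_iff, mem_setOf_eq, not_exists, not_lt] at hω
      exact ⟨0, fun n => by simpa using hω n⟩
    have hBc : μ Bᶜ = 0 := measure_mono_null hsub h0
    have : ∫ ω in B, f ω ∂μ = ∫ ω, f ω ∂μ := by
      rw [← integral_add_compl hBm hfi]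
      rw [show μ.restrict Bᶜ = 0 from Measure.restrict_eq_zero.mpr hBc, integral_zero_measure, add_zero]
    have hmax := maximal_ergodic hT.toMeasurePreserving hfm hfi
    rw [← hB] at hmax
    rw [this] at hmax
    linarith
  · have : ∀ᵐ ω ∂μ, ω ∈ s := by
      rw [ae_iff]
      exact h1
    filter_upwards [this] with ω hω
    obtain ⟨C, hC⟩ := hω
    exact ⟨C, hC⟩

theorem ae_eventually_iterate_lt {T : Ω → Ω} (hT : MeasurePreserving T μ μ)
    [IsProbabilityMeasure μ] {h : Ω → ℝ} (hm : Measurable h) (h0 : ∀ x, 0 ≤ h x)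
    (hi : Integrable h μ) {ε : ℝ} (hε : 0 < ε) :
    ∀ᵐ ω ∂μ, ∀ᶠ n : ℕ in atTop, h (T^[n] ω) < ε * n := by
  set A : ℕ → Set Ω := fun n => {x | ε * n ≤ h x} with hA
  have hAm : ∀ n, MeasurableSet (A n) := fun n => measurableSet_le measurable_const hm
  -- the layer-cake bound
  have key : ∀ x, (∑' n : ℕ, (A (n+1)).indicator (fun _ => (1:ℝ≥0∞)) x)
      ≤ ENNReal.ofReal (h x / ε) := by
    intro x
    set K := Nat.floor (h x / ε) with hK
    have hzero : ∀ n ∉ Finset.range K, (A (n+1)).indicator (fun _ => (1:ℝ≥0∞)) x = 0 := by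
      intro n hn
      apply Set.indicator_of_notMem
      intro hx
      apply hn
      simp only [Finset.mem_range]
      have h1 : ((n:ℝ) + 1) ≤ h x / ε := by
        rw [le_div_iff₀ hε]
        calc ((n:ℝ)+1) * ε = ε * (n+1) := by ring
          _ ≤ h x := by exact_mod_cast hx
      have : (n + 1 : ℕ) ≤ K := Nat.le_floor (by exact_mod_cast h1)
      omega
    rw [tsum_eq_sum hzero]
    calc ∑ n ∈ Finset.range K, (A (n+1)).indicator (fun _ => (1:ℝ≥0∞)) x
        ≤ ∑ _n ∈ Finset.range K, 1 := by
          apply Finset.sum_le_sum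
          intro n _
          classical
          by_cases hx : x ∈ A (n+1) <;> simp [Set.indicator, hx]
      _ = (K : ℝ≥0∞) := by simp
      _ ≤ ENNReal.ofReal (h x / ε) := by
          rw [show ((K:ℝ≥0∞)) = ENNReal.ofReal (K : ℝ) by simp]
          exact ENNReal.ofReal_le_ofReal (Nat.floor_le (div_nonneg (h0 x) hε.le))
  have hsum1 : (∑' n : ℕ, μ (A (n+1))) ≤ ∫⁻ x, ENNReal.ofReal (h x / ε) ∂μ := by
    have : ∀ n : ℕ, μ (A (n+1)) = ∫⁻ x, (A (n+1)).indicator (fun _ => (1:ℝ≥0∞)) x ∂μ := by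
      intro n
      exact (lintegral_indicator_one (hAm (n+1))).symm
    simp_rw [this]
    rw [← lintegral_tsum fun n => ((measurable_const.indicator (hAm (n+1)))).aemeasurable]
    exact lintegral_mono key
  have hfin : (∑' n : ℕ, μ {x | ε * n ≤ h (T^[n] x)}) ≠ ⊤ := by
    have hμA : ∀ n : ℕ, μ {x | ε * n ≤ h (T^[n] x)} = μ (A n) := by
      intro n
      have : {x | ε * n ≤ h (T^[n] x)} = T^[n] ⁻¹' (A n) := rfl
      rw [this, (hT.iterate n).measure_preimage (hAm n).nullMeasurableSet]
    simp_rw [hμA]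
    rw [tsum_eq_zero_add' ENNReal.summable]
    have h2 : ∫⁻ x, ENNReal.ofReal (h x / ε) ∂μ < ⊤ := (hi.div_const ε).lintegral_lt_top
    have h3 : μ (A 0) < ⊤ := measure_lt_top μ _
    exact ne_of_lt (lt_of_le_of_lt (add_le_add le_rfl (by simpa using hsum1))
      (by exact ENNReal.add_lt_top.mpr ⟨h3, h2⟩))
  have hfreq := measure_setOf_frequently_eq_zero (μ := μ)
    (p := fun n x => ε * n ≤ h (T^[n] x)) hfin
  rw [ae_iff]
  convert hfreq using 2
  ext x
  simp only [Filter.not_eventually, not_lt, Filter.frequently_atTop]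

end Maximal

/-- Almost-sure convergence of the stationary solution of the stochastic
recursion `U_t = γ U_{t-1} + δ` in an ergodic environment: under the
logarithmic moment conditions, the series `Σ_i δ(T^i ω) Π_{k<i} γ(T^k ω)`
converges almost surely. -/
theorem summable_random_products {Ω : Type*} [MeasurableSpace Ω]
    (μ : Measure Ω) [IsProbabilityMeasure μ]
    (T : Ω → Ω) (hT : Ergodic T μ)
    (γ : Ω → ℝ) (hγmeas : Measurable γ) (hγpos : ∀ ω, 0 < γ ω)
    (hγint : Integrable (fun ω => Real.log (γ ω)) μ)
    (hγneg : (∫ ω, Real.log (γ ω) ∂μ) < 0)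
    (δ : Ω → ℝ) (hδmeas : Measurable δ) (hδnonneg : ∀ ω, 0 ≤ δ ω)
    (hδint : Integrable (fun ω => Real.log (max (δ ω) 1)) μ) :
    ∀ᵐ ω ∂μ, Summable fun i : ℕ =>
      δ (T^[i] ω) * ∏ k ∈ Finset.range i, γ (T^[k] ω) := by
  classical
  set f : Ω → ℝ := fun ω => Real.log (γ ω) with hfdef
  set α : ℝ := (∫ ω, f ω ∂μ) / 2 with hαdef
  have hαneg : α < 0 := by rw [hαdef]; linarith
  set g : Ω → ℝ := fun ω => f ω - α with hgdef
  have hfm : Measurable f := hγmeas.log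
  have hgm : Measurable g := hfm.sub measurable_const
  have hgi : Integrable g μ := hγint.sub (integrable_const α)
  have hgneg : ∫ ω, g ω ∂μ < 0 := by
    have : ∫ ω, g ω ∂μ = (∫ ω, f ω ∂μ) - α := by
      rw [hgdef]
      rw [integral_sub hγint (integrable_const α), integral_const]
      simp [measure_univ]
    rw [this, hαdef]; linarith
  have h1 := ae_birkhoffSum_bddAbove hT hgm hgi hgneg
  set h : Ω → ℝ := fun ω => Real.log (max (δ ω) 1) with hhdef
  have hhm : Measurable h := (hδmeas.max measurable_const).log
  have hh0 : ∀ x, 0 ≤ h x := fun x => Real.log_nonneg (le_max_right _ _)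
  have hε : (0:ℝ) < -α / 2 := by linarith
  have h2 := ae_eventually_iterate_lt hT.toMeasurePreserving hhm hh0 hδint hε
  have hgf : ∀ (n : ℕ) (ω : Ω), birkhoffSum T g n ω = birkhoffSum T f n ω - n * α := by
    intro n ω
    simp only [birkhoffSum, hgdef]
    rw [Finset.sum_sub_distrib, Finset.sum_const, Finset.card_range, nsmul_eq_mul]
  have hprod : ∀ (n : ℕ) (ω : Ω),
      (∏ k ∈ Finset.range n, γ (T^[k] ω)) = Real.exp (birkhoffSum T f n ω) := by
    intro n ω
    rw [birkhoffSum, Real.exp_sum]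
    exact Finset.prod_congr rfl fun k _ => (Real.exp_log (hγpos _)).symm
  filter_upwards [h1, h2] with ω hC' hev
  obtain ⟨C, hC⟩ := hC'
  obtain ⟨N, hN⟩ := eventually_atTop.mp hev
  have hr0 : (0:ℝ) ≤ Real.exp (α / 2) := (Real.exp_pos _).le
  have hr1 : Real.exp (α / 2) < 1 := by
    rw [Real.exp_lt_one_iff]; linarith
  have hgeo : Summable (fun i : ℕ =>
      (Real.exp C * Real.exp (α / 2) ^ N) * Real.exp (α / 2) ^ i) :=
    (summable_geometric_of_lt_one hr0 hr1).mul_left _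
  rw [← summable_nat_add_iff N]
  apply Summable.of_nonneg_of_le _ _ hgeo
  · intro i
    exact mul_nonneg (hδnonneg _) (Finset.prod_nonneg fun k _ => (hγpos _).le)
  · intro i
    set n := i + N with hn
    have hSf : birkhoffSum T f n ω ≤ C + α * n := by
      have := hC n
      rw [hgf n ω] at this
      linarith
    have hhn : h (T^[n] ω) < (-α / 2) * n := hN n (by omega)
    calc δ (T^[n] ω) * ∏ k ∈ Finset.range n, γ (T^[k] ω)
        ≤ Real.exp (h (T^[n] ω)) * Real.exp (birkhoffSum T f n ω) := by
          rw [hprod n ω]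
          apply mul_le_mul_of_nonneg_right _ (Real.exp_pos _).le
          rw [hhdef]
          have : (0:ℝ) < max (δ (T^[n] ω)) 1 := lt_of_lt_of_le one_pos (le_max_right _ _)
          rw [Real.exp_log this]
          exact le_max_left _ _
      _ = Real.exp (h (T^[n] ω) + birkhoffSum T f n ω) := (Real.exp_add _ _).symm
      _ ≤ Real.exp (C + (α / 2) * n) := by
          apply Real.exp_le_exp.mpr
          have : (-α / 2) * n + (C + α * n) = C + (α / 2) * n := by ring
          linarith
      _ = (Real.exp C * Real.exp (α / 2) ^ N) * Real.exp (α / 2) ^ i := by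
          rw [Real.exp_add, mul_comm (α/2) (n:ℝ), Real.exp_nat_mul, hn, pow_add]
          ring
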